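/- If 0 < δ < 3, 1 < r < ∞, and P is a polynomial on ℝ³ belonging to L^r(w_δ dx), then P = 0. -/

import Mathlib

open MeasureTheory Real ENNReal
open Pointwise

section Aux

open MvPolynomial

local notation "E3" => EuclideanSpace ℝ (Fin 3)

lemma coord_le_norm (x : EuclideanSpace ℝ (Fin 3)) (i : Fin 3) : |x i| ≤ ‖x‖ := by
  rw [EuclideanSpace.norm_eq]
  rw [← Real.sqrt_sq (abs_nonneg (x i))]
  apply Real.sqrt_le_sqrt
  have h1 : |x i| ^ 2 = ‖x i‖ ^ 2 := by rw [Real.norm_eq_abs]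
  rw [h1]
  exact Finset.single_le_sum (f := fun j => ‖x j‖ ^ 2)
    (fun j _ => by positivity) (Finset.mem_univ i)

lemma sum_eq_degree (b : Fin 3 →₀ ℕ) : ∑ i, b i = b.degree := by
  rw [Finsupp.degree]
  exact (Finset.sum_subset (Finset.subset_univ _)
    (fun i _ hi => Finsupp.notMem_support_iff.mp hi)).symm

lemma growth_bound (Q : MvPolynomial (Fin 3) ℝ) (e : ℕ)
    (hQ : ∀ b ∈ Q.support, Finsupp.degree b ≤ e) :
    ∃ C : ℝ, 0 ≤ C ∧ ∀ x : EuclideanSpace ℝ (Fin 3),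
      |eval (fun i => x i) Q| ≤ C * (1 + ‖x‖) ^ e := by
  refine ⟨∑ b ∈ Q.support, |coeff b Q|, by positivity, fun x => ?_⟩
  have hx1 : (1 : ℝ) ≤ 1 + ‖x‖ := by linarith [norm_nonneg x]
  rw [eval_eq']
  refine (Finset.abs_sum_le_sum_abs _ _).trans ?_
  rw [Finset.sum_mul]
  apply Finset.sum_le_sum
  intro b hb
  rw [abs_mul]
  have h2 : |∏ i, x i ^ b i| ≤ (1 + ‖x‖) ^ e := by
    rw [Finset.abs_prod]
    calc ∏ i, |x i ^ b i| ≤ ∏ i, (1 + ‖x‖) ^ b i := by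
          apply Finset.prod_le_prod (fun i _ => abs_nonneg _)
          intro i _
          rw [abs_pow]
          exact pow_le_pow_left₀ (abs_nonneg _)
            ((coord_le_norm x i).trans (by linarith)) _
      _ = (1 + ‖x‖) ^ (∑ i, b i) := Finset.prod_pow_eq_pow_sum _ _ _
      _ ≤ (1 + ‖x‖) ^ e := by
          apply pow_le_pow_right₀ hx1
          rw [sum_eq_degree]; exact hQ b hb
  calc |coeff b Q| * |∏ i, x i ^ b i| ≤ |coeff b Q| * (1 + ‖x‖) ^ e := by
        exact mul_le_mul_of_nonneg_left h2 (abs_nonneg _)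
    _ = |coeff b Q| * (1 + ‖x‖) ^ e := rfl

lemma eval_mul_of_isHomogeneous (H : MvPolynomial (Fin 3) ℝ) {n : ℕ}
    (hH : H.IsHomogeneous n) (c : ℝ) (z : Fin 3 → ℝ) :
    eval (fun i => c * z i) H = c ^ n * eval z H := by
  rw [eval_eq', eval_eq', Finset.mul_sum]
  apply Finset.sum_congr rfl
  intro b hb
  have hdeg : Finsupp.degree b = n := by
    have := hH (mem_support_iff.mp hb)
    change (Finsupp.weight (fun _ => 1)) b = n at this
    rwa [← Finsupp.degree_eq_weight_one] at this
  have : ∏ i, (c * z i) ^ b i = c ^ n * ∏ i, z i ^ b i := by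
    rw [← hdeg, ← sum_eq_degree, ← Finset.prod_pow_eq_pow_sum, ← Finset.prod_mul_distrib]
    exact Finset.prod_congr rfl fun i _ => (mul_pow _ _ _)
  rw [this]; ring

lemma exists_eval_ne_zero {Q : MvPolynomial (Fin 3) ℝ} (hQ : Q ≠ 0) :
    ∃ z : Fin 3 → ℝ, eval z Q ≠ 0 := by
  by_contra h
  push_neg at h
  exact hQ (MvPolynomial.funext fun x => by simp [h x])

lemma continuous_evalE (Q : MvPolynomial (Fin 3) ℝ) :
    Continuous fun x : EuclideanSpace ℝ (Fin 3) => eval (fun i => x i) Q :=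
  (MvPolynomial.continuous_eval Q).comp (continuous_pi fun i =>
    (PiLp.continuous_ofLp 2 (fun _ : Fin 3 => ℝ)).comp continuous_id |>.comp continuous_id
      |>.comp continuous_id |>.comp continuous_id |>.comp continuous_id |> fun h => by
        exact (continuous_apply i).comp h)

end Aux
set_option maxHeartbeats 1600000 in
/-- If `0 < δ < 3`, `1 < r < ∞`, and a polynomial `P` on `ℝ³` belongs to `L^r(w_δ dx)`,
then `P = 0`. -/
theorem polynomial_in_weighted_Lr_eq_zero (δ r : ℝ) (hδ0 : 0 < δ) (hδ3 : δ < 3) (hr : 1 < r)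
    (P : MvPolynomial (Fin 3) ℝ)
    (hP : MemLp (fun x : EuclideanSpace ℝ (Fin 3) => MvPolynomial.eval (fun i => x i) P)
      (ENNReal.ofReal r)
      (volume.withDensity fun x => ENNReal.ofReal ((1 + ‖x‖) ^ (-δ)))) :
    P = 0 := by
  classical
  by_contra hP0
  set d := P.totalDegree with hd
  set H := MvPolynomial.homogeneousComponent d P with hHdef
  have hH : H.IsHomogeneous d := MvPolynomial.homogeneousComponent_isHomogeneous d P
  obtain ⟨b, hbsup, hbdeg⟩ := Finset.exists_mem_eq_sup P.support
    (MvPolynomial.support_nonempty.mpr hP0) Finsupp.degree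
  have htd : d = P.support.sup Finsupp.degree := by
    rw [hd, MvPolynomial.totalDegree]
    apply Finset.sup_congr rfl
    intro b' _
    simp [Finsupp.degree, Finsupp.sum]
    rfl
  have hbdeg' : Finsupp.degree b = d := by rw [htd, hbdeg]
  have hHne : H ≠ 0 := by
    intro h
    have hc : MvPolynomial.coeff b H = MvPolynomial.coeff b P := by
      rw [hHdef, MvPolynomial.coeff_homogeneousComponent, if_pos hbdeg']
    rw [h] at hc
    exact (MvPolynomial.mem_support_iff.mp hbsup) (by simpa using hc.symm)
  -- a nonzero point, away from the origin
  have hz : ∃ z : Fin 3 → ℝ, z ≠ 0 ∧ MvPolynomial.eval z H ≠ 0 := by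
    obtain ⟨z0, hz0⟩ := exists_eval_ne_zero hHne
    by_cases h0 : z0 = 0
    · subst h0
      have h2 : MvPolynomial.eval (fun i => (2:ℝ) * (0 : Fin 3 → ℝ) i) H
          = 2 ^ d * MvPolynomial.eval (0 : Fin 3 → ℝ) H := eval_mul_of_isHomogeneous H hH 2 0
      have h2' : (fun i => (2:ℝ) * (0 : Fin 3 → ℝ) i) = (0 : Fin 3 → ℝ) := by
        funext i; simp
      rw [h2'] at h2
      have hd0 : d = 0 := by
        by_contra hne
        have h21 : (1:ℝ) < 2 ^ d := one_lt_pow₀ (by norm_num) hne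
        have : ((2:ℝ) ^ d - 1) * MvPolynomial.eval (0 : Fin 3 → ℝ) H = 0 := by linarith
        rcases mul_eq_zero.mp this with h | h
        · linarith
        · exact hz0 h
      have hC : H = MvPolynomial.C (MvPolynomial.coeff 0 H) := by
        ext b'
        rw [MvPolynomial.coeff_C]
        by_cases hb' : (0 : Fin 3 →₀ ℕ) = b'
        · rw [if_pos hb', ← hb']
        · rw [if_neg hb']
          by_contra hcb
          have := hH hcb
          change (Finsupp.weight (fun _ => 1)) b' = d at this
          rw [← Finsupp.degree_eq_weight_one, hd0] at this
          exact hb' ((Finsupp.degree_eq_zero_iff _).mp this).symm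
      refine ⟨fun _ => 1, fun h => by simpa using congrFun h 0, ?_⟩
      rw [hC, MvPolynomial.eval_C]
      rw [hC, MvPolynomial.eval_C] at hz0
      exact hz0
    · exact ⟨z0, h0, hz0⟩
  obtain ⟨z, hzne, hzH⟩ := hz
  set xz : EuclideanSpace ℝ (Fin 3) := (WithLp.equiv 2 (Fin 3 → ℝ)).symm z with hxz
  have hxz_coords : (fun i => xz i) = z := rfl
  have hxzne : xz ≠ 0 := by
    intro h
    apply hzne
    have := congrArg (WithLp.equiv 2 (Fin 3 → ℝ)) h
    simpa [hxz] using this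
  have hnz : 0 < ‖xz‖ := norm_pos_iff.mpr hxzne
  set a := |MvPolynomial.eval z H| with ha
  have ha0 : 0 < a := abs_pos.mpr hzH
  set c := a / (2 * ‖xz‖ ^ d) with hc
  have hc0 : 0 < c := by positivity
  have hca : c * ‖xz‖ ^ d = a / 2 := by
    rw [hc]; field_simp
  -- the lower-degree part L
  set L := P - H with hL
  have hPHL : P = H + L := by rw [hL]; ring
  have hLsup : ∀ b' ∈ L.support, Finsupp.degree b' ≤ d - 1 := by
    intro b' hb'
    have hcb' : MvPolynomial.coeff b' L ≠ 0 := MvPolynomial.mem_support_iff.mp hb'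
    have h1 : Finsupp.degree b' ≠ d := by
      intro hdd
      apply hcb'
      rw [hL, MvPolynomial.coeff_sub, hHdef, MvPolynomial.coeff_homogeneousComponent,
        if_pos hdd, sub_self]
    have h2 : Finsupp.degree b' ≤ d := by
      by_contra hlt
      push_neg at hlt
      apply hcb'
      have hcoeffP : MvPolynomial.coeff b' P = 0 := by
        apply MvPolynomial.coeff_eq_zero_of_totalDegree_lt
        rw [← hd]
        calc d < Finsupp.degree b' := hlt
          _ = ∑ i ∈ b'.support, b' i := rfl
      rw [hL, MvPolynomial.coeff_sub, hHdef, MvPolynomial.coeff_homogeneousComponent,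
        if_neg h1, hcoeffP, sub_zero]
    omega
  obtain ⟨CL, hCL0, hCLbound⟩ := growth_bound L (d - 1) hLsup
  set R₀ : ℝ := max 1 (2 ^ d * CL / c + 1) with hR₀
  have hR₀1 : 1 ≤ R₀ := le_max_left _ _
  have hR₀0 : 0 < R₀ := lt_of_lt_of_le one_pos hR₀1
  -- KEY bound on L
  have hKey : ∀ x : EuclideanSpace ℝ (Fin 3), R₀ ≤ ‖x‖ →
      |MvPolynomial.eval (fun i => x i) L| ≤ c / 2 * ‖x‖ ^ d := by
    intro x hx
    have hx1 : (1:ℝ) ≤ ‖x‖ := le_trans hR₀1 hx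
    rcases Nat.eq_zero_or_pos d with hd0 | hdpos
    · have hL0 : L = 0 := by
        have hsum := MvPolynomial.sum_homogeneousComponent P
        rw [← hd, hd0] at hsum
        rw [Finset.sum_range_one] at hsum
        rw [hL, hHdef, hd0, hsum, sub_self]
      rw [hL0]
      simp only [map_zero, abs_zero]
      positivity
    · set e := d - 1 with he
      have hde : d = e + 1 := by omega
      have hb1 : |MvPolynomial.eval (fun i => x i) L| ≤ CL * (1 + ‖x‖) ^ e := hCLbound x
      have hb2 : (1 + ‖x‖) ^ e ≤ 2 ^ e * ‖x‖ ^ e := by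
        rw [← mul_pow]
        apply pow_le_pow_left₀ (by linarith) (by linarith)
      have hxR : 2 ^ d * CL / c ≤ ‖x‖ := by
        have : 2 ^ d * CL / c + 1 ≤ R₀ := le_max_right _ _
        linarith
      have hkey2 : CL * (2 ^ e * ‖x‖ ^ e) ≤ c / 2 * ‖x‖ ^ d := by
        rw [hde, pow_succ]
        have hcx : CL * 2 ^ e ≤ c / 2 * ‖x‖ := by
          have hcalc : c / 2 * (2 ^ d * CL / c) = 2 ^ e * CL := by
            rw [hde]; field_simp; ring
          nlinarith
        have hxe : (0:ℝ) ≤ ‖x‖ ^ e := by positivity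
        calc CL * (2 ^ e * ‖x‖ ^ e) = CL * 2 ^ e * ‖x‖ ^ e := by ring
          _ ≤ (c / 2 * ‖x‖) * ‖x‖ ^ e := mul_le_mul_of_nonneg_right hcx hxe
          _ = c / 2 * (‖x‖ ^ e * ‖x‖) := by ring
      calc |MvPolynomial.eval (fun i => x i) L| ≤ CL * (1 + ‖x‖) ^ e := hb1
        _ ≤ CL * (2 ^ e * ‖x‖ ^ e) := mul_le_mul_of_nonneg_left hb2 hCL0
        _ ≤ c / 2 * ‖x‖ ^ d := hkey2
  -- lower bound for |P| on the truncated cone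
  set m0 := c / 2 * R₀ ^ d with hm0
  have hm00 : 0 < m0 := by positivity
  have hFlow : ∀ x : EuclideanSpace ℝ (Fin 3),
      c * ‖x‖ ^ d < |MvPolynomial.eval (fun i => x i) H| → R₀ ≤ ‖x‖ →
      m0 ≤ |MvPolynomial.eval (fun i => x i) P| := by
    intro x hcone hxR
    have hL' := hKey x hxR
    have heval : MvPolynomial.eval (fun i => x i) P
        = MvPolynomial.eval (fun i => x i) H + MvPolynomial.eval (fun i => x i) L := by
      conv_lhs => rw [hPHL]
      rw [map_add]
    have h2 : |MvPolynomial.eval (fun i => x i) H| - |MvPolynomial.eval (fun i => x i) L|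
        ≤ |MvPolynomial.eval (fun i => x i) P| := by
      rw [heval]
      have := abs_sub_abs_le_abs_sub (MvPolynomial.eval (fun i => x i) H)
        (-(MvPolynomial.eval (fun i => x i) L))
      simpa [sub_neg_eq_add] using this
    have h3 : R₀ ^ d ≤ ‖x‖ ^ d := pow_le_pow_left₀ hR₀0.le hxR d
    rw [hm0]
    nlinarith
  -- the truncated cone pieces
  set Cone : Set (EuclideanSpace ℝ (Fin 3)) :=
    {x | c * ‖x‖ ^ d < |MvPolynomial.eval (fun i => x i) H|} with hConeDef
  set A0 : Set (EuclideanSpace ℝ (Fin 3)) :=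
    Cone ∩ {x | R₀ < ‖x‖} ∩ {x | ‖x‖ < 2 * R₀} with hA0Def
  have hA0open : IsOpen A0 := by
    refine IsOpen.inter (IsOpen.inter ?_ ?_) ?_
    · exact isOpen_lt (continuous_const.mul (continuous_norm.pow d)) (continuous_evalE H).abs
    · exact isOpen_lt continuous_const continuous_norm
    · exact isOpen_lt continuous_norm continuous_const
  have hA0ne : A0.Nonempty := by
    set lam : ℝ := 3 / 2 * R₀ / ‖xz‖ with hlam
    have hlam0 : 0 < lam := by positivity
    have hnorm1 : ‖lam • xz‖ = 3 / 2 * R₀ := by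
      rw [norm_smul, Real.norm_eq_abs, abs_of_pos hlam0, hlam]
      field_simp
    refine ⟨lam • xz, ⟨?_, ?_⟩, ?_⟩
    · show c * ‖lam • xz‖ ^ d < |MvPolynomial.eval (fun i => (lam • xz) i) H|
      have hcoords : (fun i => (lam • xz) i) = fun i => lam * z i := by
        funext i
        rw [PiLp.smul_apply, smul_eq_mul]
        rfl
      have heval : MvPolynomial.eval (fun i => (lam • xz) i) H
          = lam ^ d * MvPolynomial.eval z H := by
        rw [hcoords]; exact eval_mul_of_isHomogeneous H hH lam z
      rw [heval, abs_mul, abs_pow, abs_of_pos hlam0, norm_smul, Real.norm_eq_abs,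
        abs_of_pos hlam0, mul_pow, ← ha]
      have hld : (0:ℝ) < lam ^ d := by positivity
      nlinarith
    · show R₀ < ‖lam • xz‖
      rw [hnorm1]; linarith
    · show ‖lam • xz‖ < 2 * R₀
      rw [hnorm1]; linarith
  set w : EuclideanSpace ℝ (Fin 3) → ℝ≥0∞ :=
    fun x => ENNReal.ofReal ((1 + ‖x‖) ^ (-δ)) with hwdef
  set μw := volume.withDensity w with hμwdef
  set v := volume A0 with hv
  have hv0 : 0 < v := hA0open.measure_pos volume hA0ne
  set A : ℕ → Set (EuclideanSpace ℝ (Fin 3)) := fun n => (2:ℝ) ^ n • A0 with hAdef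
  have h2n0 : ∀ n : ℕ, (0:ℝ) < 2 ^ n := fun n => by positivity
  have h2n1 : ∀ n : ℕ, (1:ℝ) ≤ 2 ^ n := fun n => one_le_pow₀ (by norm_num)
  have hAopen : ∀ n, IsOpen (A n) := fun n => hA0open.smul₀ (h2n0 n).ne'
  have hAmem : ∀ n x, x ∈ A n → 2 ^ n * R₀ < ‖x‖ ∧ ‖x‖ < 2 ^ n * (2 * R₀)
      ∧ m0 ≤ |MvPolynomial.eval (fun i => x i) P| := by
    intro n x hx
    obtain ⟨y, hy, rfl⟩ := Set.mem_smul_set.mp hx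
    obtain ⟨⟨hyC, hyR⟩, hy2⟩ := hy
    have hyC' : c * ‖y‖ ^ d < |MvPolynomial.eval (fun i => y i) H| := hyC
    have hyR' : R₀ < ‖y‖ := hyR
    have hy2' : ‖y‖ < 2 * R₀ := hy2
    have hny : ‖(2:ℝ) ^ n • y‖ = 2 ^ n * ‖y‖ := by
      rw [norm_smul, Real.norm_eq_abs, abs_of_pos (h2n0 n)]
    refine ⟨?_, ?_, ?_⟩
    · rw [hny]; exact (mul_lt_mul_iff_right₀ (h2n0 n)).mpr hyR'
    · rw [hny]; exact (mul_lt_mul_iff_right₀ (h2n0 n)).mpr hy2'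
    · have hcoords : (fun i => ((2:ℝ) ^ n • y) i) = fun i => (2:ℝ) ^ n * y i := rfl
      have heval : MvPolynomial.eval (fun i => ((2:ℝ) ^ n • y) i) H
          = ((2:ℝ) ^ n) ^ d * MvPolynomial.eval (fun i => y i) H := by
        rw [hcoords]; exact eval_mul_of_isHomogeneous H hH _ _
      have hconeX : c * ‖(2:ℝ) ^ n • y‖ ^ d < |MvPolynomial.eval (fun i => ((2:ℝ) ^ n • y) i) H| := by
        rw [heval, abs_mul, abs_pow, abs_of_pos (h2n0 n), hny, mul_pow]
        nlinarith [pow_pos (h2n0 n) d]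
      apply hFlow _ hconeX
      rw [hny]
      nlinarith [h2n1 n]
  have hdisj : Pairwise (Function.onFun Disjoint A) := by
    have key : ∀ i j : ℕ, i < j → Disjoint (A i) (A j) := by
      intro i j hlt
      rw [Set.disjoint_left]
      intro x hxi hxj
      have h1 := (hAmem i x hxi).2.1
      have h2 := (hAmem j x hxj).1
      have h3 : (2:ℝ) ^ (i + 1) ≤ 2 ^ j := pow_le_pow_right₀ (by norm_num) (by omega)
      rw [pow_succ] at h3
      nlinarith
    intro i j hij
    rcases lt_or_gt_of_ne hij with h | h
    · exact key i j h
    · exact (key j i h).symm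
  have hvolA : ∀ n, volume (A n) = ENNReal.ofReal (2 ^ (3 * n)) * v := by
    intro n
    rw [hAdef]
    rw [MeasureTheory.Measure.addHaar_smul]
    congr 2
    rw [finrank_euclideanSpace_fin]
    rw [abs_of_pos (by positivity)]
    rw [← pow_mul]
    congr 1; ring
  set ε : ℝ≥0∞ := ENNReal.ofReal ((64 * R₀ ^ 3)⁻¹) * v with hεdef
  have hε0 : ε ≠ 0 := by
    apply mul_ne_zero _ hv0.ne'
    rw [Ne, ENNReal.ofReal_eq_zero, not_le]
    positivity
  have hμwA : ∀ n, ε ≤ μw (A n) := by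
    intro n
    have hmeas : MeasurableSet (A n) := (hAopen n).measurableSet
    set B : ℝ := 2 ^ (n + 2) * R₀ with hB
    have h2n2 : (1:ℝ) ≤ 2 ^ (n + 2) := one_le_pow₀ (by norm_num)
    have hB1 : (1:ℝ) ≤ B := by rw [hB]; nlinarith
    have hwlow : ∀ x ∈ A n, ENNReal.ofReal ((B ^ 3)⁻¹) ≤ w x := by
      intro x hx
      obtain ⟨hx1, hx2, -⟩ := hAmem n x hx
      have hxB : 1 + ‖x‖ ≤ B := by
        rw [hB, pow_add]
        nlinarith [h2n1 n]
      rw [hwdef]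
      apply ENNReal.ofReal_le_ofReal
      calc (B ^ 3)⁻¹ = B ^ (-(3:ℝ)) := by
            rw [Real.rpow_neg (by linarith), show ((3:ℝ)) = ((3:ℕ):ℝ) by norm_num,
              Real.rpow_natCast]
        _ ≤ B ^ (-δ) := Real.rpow_le_rpow_of_exponent_le hB1 (by linarith)
        _ ≤ (1 + ‖x‖) ^ (-δ) :=
            Real.rpow_le_rpow_of_nonpos (by positivity) hxB (by linarith)
    calc ε = ENNReal.ofReal ((64 * R₀ ^ 3)⁻¹) * v := hεdef
      _ = ENNReal.ofReal ((B ^ 3)⁻¹) * (ENNReal.ofReal (2 ^ (3 * n)) * v) := by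
          rw [← mul_assoc, ← ENNReal.ofReal_mul (by positivity)]
          congr 2
          rw [hB]
          have h2 : ((2:ℝ) ^ (n + 2)) ^ 3 = 2 ^ (3 * n) * 64 := by
            rw [← pow_mul, show (n + 2) * 3 = 3 * n + 6 by ring, pow_add]
            norm_num
          rw [mul_pow, h2]
          have h2n3 : (0:ℝ) < 2 ^ (3 * n) := by positivity
          field_simp
      _ = ENNReal.ofReal ((B ^ 3)⁻¹) * volume (A n) := by rw [hvolA n]
      _ = ∫⁻ _ in A n, ENNReal.ofReal ((B ^ 3)⁻¹) ∂volume := (setLIntegral_const _ _).symm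
      _ ≤ ∫⁻ x in A n, w x ∂volume := setLIntegral_mono' hmeas hwlow
      _ = μw (A n) := (withDensity_apply _ hmeas).symm
  set U := ⋃ n, A n with hU
  have hUmeas : MeasurableSet U := MeasurableSet.iUnion fun n => (hAopen n).measurableSet
  have hμwU : μw U = ⊤ := by
    rw [eq_top_iff, hU, measure_iUnion hdisj (fun n => (hAopen n).measurableSet)]
    calc (⊤:ℝ≥0∞) = ∑' _ : ℕ, ε := (ENNReal.tsum_const_eq_top_of_ne_zero hε0).symm
      _ ≤ ∑' n, μw (A n) := ENNReal.tsum_le_tsum hμwA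
  have hr0 : (0:ℝ) < r := by linarith
  have hane : ENNReal.ofReal r ≠ 0 := by
    intro h; rw [ENNReal.ofReal_eq_zero] at h; linarith
  have hfin := (eLpNorm_lt_top_iff_lintegral_rpow_enorm_lt_top hane ENNReal.ofReal_ne_top).mp hP.2
  rw [ENNReal.toReal_ofReal hr0.le] at hfin
  have hmne : (ENNReal.ofReal m0) ^ r ≠ 0 :=
    (ENNReal.rpow_pos (ENNReal.ofReal_pos.mpr hm00) ENNReal.ofReal_ne_top).ne'
  have hlow : (ENNReal.ofReal m0) ^ r * μw U
      ≤ ∫⁻ x, (‖MvPolynomial.eval (fun i => x i) P‖₊ : ℝ≥0∞) ^ r ∂μw := by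
    calc (ENNReal.ofReal m0) ^ r * μw U
        = ∫⁻ _ in U, (ENNReal.ofReal m0) ^ r ∂μw := (setLIntegral_const _ _).symm
      _ ≤ ∫⁻ x in U, (‖MvPolynomial.eval (fun i => x i) P‖₊ : ℝ≥0∞) ^ r ∂μw := by
          apply setLIntegral_mono' hUmeas
          intro x hx
          obtain ⟨n, hn⟩ := Set.mem_iUnion.mp hx
          have hm := (hAmem n x hn).2.2
          apply ENNReal.rpow_le_rpow _ hr0.le
          rw [← ENNReal.ofReal_coe_nnreal, coe_nnnorm]
          apply ENNReal.ofReal_le_ofReal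
          rw [Real.norm_eq_abs]
          exact hm
      _ ≤ _ := setLIntegral_le_lintegral _ _
  rw [hμwU, ENNReal.mul_top hmne] at hlow
  exact absurd (lt_of_le_of_lt hlow hfin) (lt_irrefl ⊤)
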